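/- arXiv:1307.0685 — 4 statements merged into one kernel-verified Lean document; each statement's English description precedes it below -/
import Mathlib

section
/- Let M_1 ≥ M_2 ≥ M_3 and N be positive integers, and let d_{ij} (i ≠ j, i,j ∈ {1,2,3}) be nonnegative reals satisfying, for every permutation {i,j,k} of {1,2,3}: d_{ij} + d_{ik} ≤ min(N, M_i, M_j + M_k), d_{ji} + d_{ki} ≤ min(N, M_i, M_j + M_k), d_{ij} + d_{ik} + max(d_{jk}, d_{kj}) ≤ min(N, M_j + M_k), and d_{ji} + d_{ki} + max(d_{jk}, d_{kj}) ≤ min(N, M_j + M_k). Then the total D_t = Σ_{i≠j} d_{ij} satisfies D_t ≤ min(2N, M_1 + M_2 + M_3, 2M_2 + 2M_3). -/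
/-- Theorem 1: total DoF bound for the MIMO Y channel. -/
theorem stmt_4 (M1 M2 M3 N : ℕ) (hM1 : 0 < M1) (hM2 : 0 < M2) (hM3 : 0 < M3)
    (hN : 0 < N) (hM12 : M1 ≥ M2) (hM23 : M2 ≥ M3)
    (d12 d13 d21 d23 d31 d32 : ℝ)
    (h12 : 0 ≤ d12) (h13 : 0 ≤ d13) (h21 : 0 ≤ d21)
    (h23 : 0 ≤ d23) (h31 : 0 ≤ d31) (h32 : 0 ≤ d32)
    (hu1 : d12 + d13 ≤ min (N : ℝ) (min (M1 : ℝ) ((M2 : ℝ) + M3)))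
    (hu2 : d21 + d23 ≤ min (N : ℝ) (min (M2 : ℝ) ((M1 : ℝ) + M3)))
    (hu3 : d31 + d32 ≤ min (N : ℝ) (min (M3 : ℝ) ((M1 : ℝ) + M2)))
    (hd1 : d21 + d31 ≤ min (N : ℝ) (min (M1 : ℝ) ((M2 : ℝ) + M3)))
    (hd2 : d12 + d32 ≤ min (N : ℝ) (min (M2 : ℝ) ((M1 : ℝ) + M3)))
    (hd3 : d13 + d23 ≤ min (N : ℝ) (min (M3 : ℝ) ((M1 : ℝ) + M2)))
    (hg1 : d12 + d13 + max d23 d32 ≤ min (N : ℝ) ((M2 : ℝ) + M3))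
    (hg2 : d21 + d23 + max d13 d31 ≤ min (N : ℝ) ((M1 : ℝ) + M3))
    (hg3 : d31 + d32 + max d12 d21 ≤ min (N : ℝ) ((M1 : ℝ) + M2))
    (hg4 : d21 + d31 + max d23 d32 ≤ min (N : ℝ) ((M2 : ℝ) + M3))
    (hg5 : d12 + d32 + max d13 d31 ≤ min (N : ℝ) ((M1 : ℝ) + M3))
    (hg6 : d13 + d23 + max d12 d21 ≤ min (N : ℝ) ((M1 : ℝ) + M2)) :
    d12 + d13 + d21 + d23 + d31 + d32
      ≤ min (2 * (N : ℝ)) (min ((M1 : ℝ) + M2 + M3) (2 * (M2 : ℝ) + 2 * M3)) := by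
  have e1 : d12 + d13 ≤ (M1 : ℝ) := le_trans hu1 (le_trans (min_le_right _ _) (min_le_left _ _))
  have e2 : d21 + d23 ≤ (M2 : ℝ) := le_trans hu2 (le_trans (min_le_right _ _) (min_le_left _ _))
  have e3 : d31 + d32 ≤ (M3 : ℝ) := le_trans hu3 (le_trans (min_le_right _ _) (min_le_left _ _))
  have n1 : d12 + d13 + d32 ≤ (N : ℝ) :=
    le_trans (by linarith [le_max_right d23 d32]) (le_trans hg1 (min_le_left _ _))
  have n2 : d21 + d23 + d31 ≤ (N : ℝ) :=
    le_trans (by linarith [le_max_right d13 d31]) (le_trans hg2 (min_le_left _ _))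
  have m1 : d12 + d13 + d23 ≤ (M2 : ℝ) + M3 :=
    le_trans (by linarith [le_max_left d23 d32]) (le_trans hg1 (min_le_right _ _))
  have m2 : d21 + d31 + d32 ≤ (M2 : ℝ) + M3 :=
    le_trans (by linarith [le_max_right d23 d32]) (le_trans hg4 (min_le_right _ _))
  refine le_min (by linarith) (le_min (by linarith) (by linarith))
end

section
/- Let M_1 ≥ M_2 ≥ M_3 ≥ M_4 and N be positive integers, and let d_{ij} (i ≠ j in {1,2,3,4}) be nonnegative reals. Suppose for each i, d_{ij} + d_{ik} + d_{il} ≤ min(M_i, N, M_j + M_k + M_l) (with {j,k,l} the complement of {i}), and suppose for each i, the three-user genie bounds d_{il} + d_{jl} + d_{kl} + d_{ij} + d_{ik} + max(d_{jk}, d_{kj}) ≤ min(N, M_i + M_j + M_k) and their downlink counterparts hold. Then D_t = Σ_{i≠j} d_{ij} ≤ min(2N, M_1 + M_2 + M_3 + M_4, 2M_2 + 2M_3 + 2M_4). -/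
/-- Theorem 2: total DoF bound for the 4-user MIMO relay network. -/
theorem stmt_5 (M1 M2 M3 M4 N : ℕ)
    (hM1 : 0 < M1) (hM2 : 0 < M2) (hM3 : 0 < M3) (hM4 : 0 < M4) (hN : 0 < N)
    (hM12 : M1 ≥ M2) (hM23 : M2 ≥ M3) (hM34 : M3 ≥ M4)
    (M : Fin 4 → ℕ) (hM : M = ![M1, M2, M3, M4])
    (d : Fin 4 → Fin 4 → ℝ) (hpos : ∀ i j, 0 ≤ d i j)
    (hper : ∀ i j k l : Fin 4, i ≠ j → i ≠ k → i ≠ l → j ≠ k → j ≠ l → k ≠ l →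
      d i j + d i k + d i l ≤ min (M i : ℝ) (min (N : ℝ) ((M j : ℝ) + M k + M l)))
    (hgenieUL : ∀ i j k l : Fin 4, i ≠ j → i ≠ k → i ≠ l → j ≠ k → j ≠ l → k ≠ l →
      d i l + d j l + d k l + d i j + d i k + max (d j k) (d k j)
        ≤ min (N : ℝ) ((M i : ℝ) + M j + M k))
    (hgenieDL : ∀ i j k l : Fin 4, i ≠ j → i ≠ k → i ≠ l → j ≠ k → j ≠ l → k ≠ l →
      d l i + d l j + d l k + d j i + d k i + max (d j k) (d k j)
        ≤ min (N : ℝ) ((M i : ℝ) + M j + M k)) :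
    (∑ i : Fin 4, ∑ j : Fin 4, if i = j then 0 else d i j)
      ≤ min (2 * (N : ℝ))
          (min ((M1 : ℝ) + M2 + M3 + M4) (2 * (M2 : ℝ) + 2 * M3 + 2 * M4)) := by
  subst hM
  have h1 := hper 0 1 2 3 (by decide) (by decide) (by decide) (by decide) (by decide) (by decide)
  have h2 := hper 1 0 2 3 (by decide) (by decide) (by decide) (by decide) (by decide) (by decide)
  have h3 := hper 2 0 1 3 (by decide) (by decide) (by decide) (by decide) (by decide) (by decide)
  have h4 := hper 3 0 1 2 (by decide) (by decide) (by decide) (by decide) (by decide) (by decide)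
  have g1 := hgenieUL 0 1 2 3 (by decide) (by decide) (by decide) (by decide) (by decide) (by decide)
  have g2 := hgenieDL 0 1 2 3 (by decide) (by decide) (by decide) (by decide) (by decide) (by decide)
  simp only [Matrix.cons_val_zero, Matrix.cons_val_one, Matrix.head_cons,
    Matrix.cons_val_two, Matrix.tail_cons, Matrix.cons_val_three] at h1 h2 h3 h4 g1 g2
  simp only [Fin.sum_univ_four, reduceIte, Fin.mk_zero, Fin.mk_one,
    show (0:Fin 4) ≠ 1 by decide, show (0:Fin 4) ≠ 2 by decide, show (0:Fin 4) ≠ 3 by decide,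
    show (1:Fin 4) ≠ 0 by decide, show (1:Fin 4) ≠ 2 by decide, show (1:Fin 4) ≠ 3 by decide,
    show (2:Fin 4) ≠ 0 by decide, show (2:Fin 4) ≠ 1 by decide, show (2:Fin 4) ≠ 3 by decide,
    show (3:Fin 4) ≠ 0 by decide, show (3:Fin 4) ≠ 1 by decide, show (3:Fin 4) ≠ 2 by decide,
    if_neg, if_pos]
  refine le_min ?_ (le_min ?_ ?_)
  · have a1 : d 1 2 ≤ max (d 1 2) (d 2 1) := le_max_left _ _
    have a2 : d 2 1 ≤ max (d 1 2) (d 2 1) := le_max_right _ _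
    have b1 := min_le_left (N:ℝ) ((↑M1:ℝ) + ↑M2 + ↑M3)
    linarith
  · have b1 := min_le_left (↑M1:ℝ) (min (N:ℝ) ((↑M2:ℝ) + ↑M3 + ↑M4))
    have b2 := min_le_left (↑M2:ℝ) (min (N:ℝ) ((↑M1:ℝ) + ↑M3 + ↑M4))
    have b3 := min_le_left (↑M3:ℝ) (min (N:ℝ) ((↑M1:ℝ) + ↑M2 + ↑M4))
    have b4 := min_le_left (↑M4:ℝ) (min (N:ℝ) ((↑M1:ℝ) + ↑M2 + ↑M3))
    linarith
  · have b1 := (min_le_right (↑M1:ℝ) (min (N:ℝ) ((↑M2:ℝ) + ↑M3 + ↑M4))).trans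
      (min_le_right _ _)
    have b2 := min_le_left (↑M2:ℝ) (min (N:ℝ) ((↑M1:ℝ) + ↑M3 + ↑M4))
    have b3 := min_le_left (↑M3:ℝ) (min (N:ℝ) ((↑M1:ℝ) + ↑M2 + ↑M4))
    have b4 := min_le_left (↑M4:ℝ) (min (N:ℝ) ((↑M1:ℝ) + ↑M2 + ↑M3))
    linarith
end

section
/- Let N be a positive integer and d_{ij} nonnegative integers for i ≠ j in {1,2,3,4}. Suppose that for every permutation {i,j,k,l} of {1,2,3,4}, the bound d_{il} + d_{jl} + d_{kl} + d_{ij} + d_{ik} + max(d_{jk}, d_{kj}) ≤ N holds. Then every sum of the form obtained by choosing, for each unordered pair {i,j}, one of d_{ij} or d_{ji}, such that the chosen directed edges contain no directed 3-cycle, is at most N. -/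
set_option maxHeartbeats 2000000 in
/-- Any cycle-free selection of one direction per unordered pair is bounded by N
(4-user relay network). -/
theorem stmt_6 (N : ℕ) (hN : 0 < N) (d : Fin 4 → Fin 4 → ℕ)
    (hgenie : ∀ i j k l : Fin 4, i ≠ j → i ≠ k → i ≠ l → j ≠ k → j ≠ l → k ≠ l →
      d i l + d j l + d k l + d i j + d i k + max (d j k) (d k j) ≤ N)
    (sel : Fin 4 → Fin 4 → Bool)
    (hsel : ∀ i j : Fin 4, i ≠ j → (sel i j = true ↔ ¬ sel j i = true))
    (hnocycle : ∀ a b c : Fin 4, a ≠ b → b ≠ c → a ≠ c →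
      ¬ (sel a b = true ∧ sel b c = true ∧ sel c a = true)) :
    (∑ p ∈ Finset.univ.filter (fun p : Fin 4 × Fin 4 => p.1 < p.2),
      if sel p.1 p.2 then d p.1 p.2 else d p.2 p.1) ≤ N := by
  have G : ∀ i j k l : Fin 4, i ≠ j → i ≠ k → i ≠ l → j ≠ k → j ≠ l → k ≠ l →
      d i l + d j l + d k l + d i j + d i k + d j k ≤ N := by
    intro i j k l h1 h2 h3 h4 h5 h6
    have hg := hgenie i j k l h1 h2 h3 h4 h5 h6
    have hm := le_max_left (d j k) (d k j)
    omega
  have hrev : ∀ i j : Fin 4, i ≠ j → sel j i = !sel i j := by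
    intro i j hij
    have h := hsel i j hij
    rcases Bool.eq_false_or_eq_true (sel i j) with hij' | hij' <;>
      rcases Bool.eq_false_or_eq_true (sel j i) with hji | hji <;>
        simp [hij', hji] at h ⊢
  have ne01 : (0:Fin 4) ≠ 1 := by decide
  have ne02 : (0:Fin 4) ≠ 2 := by decide
  have ne03 : (0:Fin 4) ≠ 3 := by decide
  have ne10 : (1:Fin 4) ≠ 0 := by decide
  have ne12 : (1:Fin 4) ≠ 2 := by decide
  have ne13 : (1:Fin 4) ≠ 3 := by decide
  have ne20 : (2:Fin 4) ≠ 0 := by decide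
  have ne21 : (2:Fin 4) ≠ 1 := by decide
  have ne23 : (2:Fin 4) ≠ 3 := by decide
  have ne30 : (3:Fin 4) ≠ 0 := by decide
  have ne31 : (3:Fin 4) ≠ 1 := by decide
  have ne32 : (3:Fin 4) ≠ 2 := by decide
  have G0123 := G 0 1 2 3 ne01 ne02 ne03 ne12 ne13 ne23
  have G0132 := G 0 1 3 2 ne01 ne03 ne02 ne13 ne12 ne32
  have G0213 := G 0 2 1 3 ne02 ne01 ne03 ne21 ne23 ne13
  have G0231 := G 0 2 3 1 ne02 ne03 ne01 ne23 ne21 ne31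
  have G0312 := G 0 3 1 2 ne03 ne01 ne02 ne31 ne32 ne12
  have G0321 := G 0 3 2 1 ne03 ne02 ne01 ne32 ne31 ne21
  have G1023 := G 1 0 2 3 ne10 ne12 ne13 ne02 ne03 ne23
  have G1032 := G 1 0 3 2 ne10 ne13 ne12 ne03 ne02 ne32
  have G1203 := G 1 2 0 3 ne12 ne10 ne13 ne20 ne23 ne03
  have G1230 := G 1 2 3 0 ne12 ne13 ne10 ne23 ne20 ne30
  have G1302 := G 1 3 0 2 ne13 ne10 ne12 ne30 ne32 ne02
  have G1320 := G 1 3 2 0 ne13 ne12 ne10 ne32 ne30 ne20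
  have G2013 := G 2 0 1 3 ne20 ne21 ne23 ne01 ne03 ne13
  have G2031 := G 2 0 3 1 ne20 ne23 ne21 ne03 ne01 ne31
  have G2103 := G 2 1 0 3 ne21 ne20 ne23 ne10 ne13 ne03
  have G2130 := G 2 1 3 0 ne21 ne23 ne20 ne13 ne10 ne30
  have G2301 := G 2 3 0 1 ne23 ne20 ne21 ne30 ne31 ne01
  have G2310 := G 2 3 1 0 ne23 ne21 ne20 ne31 ne30 ne10
  have G3012 := G 3 0 1 2 ne30 ne31 ne32 ne01 ne02 ne12
  have G3021 := G 3 0 2 1 ne30 ne32 ne31 ne02 ne01 ne21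
  have G3102 := G 3 1 0 2 ne31 ne30 ne32 ne10 ne12 ne02
  have G3120 := G 3 1 2 0 ne31 ne32 ne30 ne12 ne10 ne20
  have G3201 := G 3 2 0 1 ne32 ne30 ne31 ne20 ne21 ne01
  have G3210 := G 3 2 1 0 ne32 ne31 ne30 ne21 ne20 ne10
  have C012 := hnocycle 0 1 2 ne01 ne12 ne02
  have C021 := hnocycle 0 2 1 ne02 ne21 ne01
  have C013 := hnocycle 0 1 3 ne01 ne13 ne03
  have C031 := hnocycle 0 3 1 ne03 ne31 ne01
  have C023 := hnocycle 0 2 3 ne02 ne23 ne03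
  have C032 := hnocycle 0 3 2 ne03 ne32 ne02
  have C123 := hnocycle 1 2 3 ne12 ne23 ne13
  have C132 := hnocycle 1 3 2 ne13 ne32 ne12
  have h10 := hrev 0 1 ne01
  have h20 := hrev 0 2 ne02
  have h30 := hrev 0 3 ne03
  have h21 := hrev 1 2 ne12
  have h31 := hrev 1 3 ne13
  have h32 := hrev 2 3 ne23
  clear hgenie hsel hnocycle hrev G
  rw [Finset.sum_filter, Fintype.sum_prod_type]
  simp only [Fin.sum_univ_four]
  norm_num [Fin.lt_def, show ((3:Fin 4):ℕ) = 3 from rfl]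
  rcases Bool.eq_false_or_eq_true (sel 0 1) with h01 | h01 <;>
  rcases Bool.eq_false_or_eq_true (sel 0 2) with h02 | h02 <;>
  rcases Bool.eq_false_or_eq_true (sel 0 3) with h03 | h03 <;>
  rcases Bool.eq_false_or_eq_true (sel 1 2) with h12 | h12 <;>
  rcases Bool.eq_false_or_eq_true (sel 1 3) with h13 | h13 <;>
  rcases Bool.eq_false_or_eq_true (sel 2 3) with h23 | h23 <;>
    (rw [h01] at h10; rw [h02] at h20; rw [h03] at h30
     rw [h12] at h21; rw [h13] at h31; rw [h23] at h32
     simp only [Bool.not_true, Bool.not_false] at h10 h20 h30 h21 h31 h32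
     simp only [h01, h02, h03, h12, h13, h23, if_true, if_false,
       Bool.false_eq_true, Bool.true_eq_false, if_neg, reduceIte]
     first
      | exact absurd (And.intro h01 (And.intro h12 h20)) C012
      | exact absurd (And.intro h02 (And.intro h21 h10)) C021
      | exact absurd (And.intro h01 (And.intro h13 h30)) C013
      | exact absurd (And.intro h03 (And.intro h31 h10)) C031
      | exact absurd (And.intro h02 (And.intro h23 h30)) C023
      | exact absurd (And.intro h03 (And.intro h32 h20)) C032
      | exact absurd (And.intro h12 (And.intro h23 h31)) C123
      | exact absurd (And.intro h13 (And.intro h32 h21)) C132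
      | omega)
end

section
/- Let d_{12}, d_{13}, d_{21}, d_{23}, d_{31}, d_{32} be nonnegative integers. If max(d_{12},d_{21}) + max(d_{13},d_{31}) + max(d_{23},d_{32}) > N for a positive integer N, while d_{12}+d_{13}+max(d_{23},d_{32}) ≤ N, d_{21}+d_{31}+max(d_{23},d_{32}) ≤ N, d_{21}+d_{23}+max(d_{13},d_{31}) ≤ N, d_{12}+d_{32}+max(d_{13},d_{31}) ≤ N, d_{31}+d_{32}+max(d_{12},d_{21}) ≤ N, and d_{13}+d_{23}+max(d_{12},d_{21}) ≤ N, then either max(d_{12},d_{21}) + max(d_{13},d_{31}) + max(d_{23},d_{32}) = d_{12}+d_{23}+d_{31} or it equals d_{21}+d_{13}+d_{32}; i.e., the maximizers form a directed 3-cycle. -/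
/-- For the MIMO Y channel, if N̄ = Σ max(d_ij, d_ji) exceeds N while all genie
bounds (restricted to N) hold, the maximizers must form a directed 3-cycle. -/
theorem stmt_17 (d12 d13 d21 d23 d31 d32 N : ℕ) (hN : 0 < N)
    (hbar : max d12 d21 + max d13 d31 + max d23 d32 > N)
    (h1 : d12 + d13 + max d23 d32 ≤ N)
    (h2 : d21 + d31 + max d23 d32 ≤ N)
    (h3 : d21 + d23 + max d13 d31 ≤ N)
    (h4 : d12 + d32 + max d13 d31 ≤ N)
    (h5 : d31 + d32 + max d12 d21 ≤ N)
    (h6 : d13 + d23 + max d12 d21 ≤ N) :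
    max d12 d21 + max d13 d31 + max d23 d32 = d12 + d23 + d31 ∨
    max d12 d21 + max d13 d31 + max d23 d32 = d21 + d13 + d32 := by
  rcases max_cases d12 d21 with ⟨e1,_⟩|⟨e1,_⟩ <;>
  rcases max_cases d13 d31 with ⟨e2,_⟩|⟨e2,_⟩ <;>
  rcases max_cases d23 d32 with ⟨e3,_⟩|⟨e3,_⟩ <;>
  rw [e1,e2,e3] at * <;> omega
end
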